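/- If a topological space X is a homotopy retract of a topological space Y (i.e., there exist maps i : X → Y and r : Y → X with r ∘ i homotopic to the identity on X), then TC(X) ≤ TC(Y), where TC denotes the reduced topological complexity (the minimal k such that X × X admits an open cover by k+1 sets, each admitting a continuous local section of the free path fibration p_X : X^I → X × X sending γ to (γ(0), γ(1))). -/
import Mathlib


open unitInterval in
/-- An open cover of `X × X` by `k+1` sets, each admitting a continuous local
section of the free path fibration `p_X : X^I → X × X`, `γ ↦ (γ 0, γ 1)`. -/
def tcCover (X : Type*) [TopologicalSpace X] (k : ℕ) : Prop :=
  ∃ U : Fin (k + 1) → Set (X × X),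
    (∀ i, IsOpen (U i)) ∧ (⋃ i, U i) = Set.univ ∧
    ∀ i, ∃ s : C(U i, C(unitInterval, X)),
      ∀ p : U i, s p 0 = (p : X × X).1 ∧ s p 1 = (p : X × X).2

/-- The reduced topological complexity of a space. -/
noncomputable def topComplexity (X : Type*) [TopologicalSpace X] : ℕ∞ :=
  sInf {n : ℕ∞ | ∃ k : ℕ, n = k ∧ tcCover X k}

set_option maxHeartbeats 1000000 in
open unitInterval in
lemma tcCover_of_retract {X Y : Type*} [TopologicalSpace X] [TopologicalSpace Y]
    (i : C(X, Y)) (r : C(Y, X)) (h : (r.comp i).Homotopic (ContinuousMap.id X))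
    {k : ℕ} (hY : tcCover Y k) : tcCover X k := by
  obtain ⟨H⟩ := h
  obtain ⟨V, hVopen, hVcov, hVsec⟩ := hY
  refine ⟨fun j => (fun p : X × X => (i p.1, i p.2)) ⁻¹' V j, ?_, ?_, ?_⟩
  · intro j
    exact (hVopen j).preimage (by continuity)
  · ext p
    simp only [Set.mem_iUnion, Set.mem_univ, iff_true]
    have : (i p.1, i p.2) ∈ ⋃ j, V j := by rw [hVcov]; trivial
    simpa using this
  · intro j
    obtain ⟨s, hs⟩ := hVsec j
    set U : Set (X × X) := (fun p : X × X => (i p.1, i p.2)) ⁻¹' V j with hU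
    -- γ₁ : path from x₁ to r (i x₁)
    have hHcont : Continuous fun q : unitInterval × X => H q := H.continuous
    let γ₁ : ∀ p : U, Path ((p : X × X).1) (r (i (p : X × X).1)) := fun p =>
      { toFun := fun t => H (σ t, (p : X × X).1)
        continuous_toFun := hHcont.comp (continuous_symm.prodMk continuous_const)
        source' := by show H (σ 0, _) = _; rw [symm_zero, H.apply_one]; rfl
        target' := by show H (σ 1, _) = _; rw [symm_one, H.apply_zero]; rfl }
    have hγ₁ : Continuous ↿γ₁ := by
      have : (↿γ₁ : U × unitInterval → X) =
          fun q => H (σ q.2, (q.1 : X × X).1) := rfl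
      rw [this]
      exact hHcont.comp ((continuous_symm.comp continuous_snd).prodMk
        (continuous_fst.comp (continuous_subtype_val.comp continuous_fst)))
    let e : U → V j := fun p => ⟨(i (p : X × X).1, i (p : X × X).2), p.2⟩
    have he : Continuous e :=
      Continuous.subtype_mk ((i.continuous.comp (continuous_fst.comp continuous_subtype_val)).prodMk
        (i.continuous.comp (continuous_snd.comp continuous_subtype_val))) _
    let γ₂ : ∀ p : U, Path (r (i (p : X × X).1)) (r (i (p : X × X).2)) := fun p =>
      { toFun := fun t => r (s (e p) t)
        continuous_toFun := r.continuous.comp (s (e p)).continuous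
        source' := by show r (s (e p) 0) = _; rw [(hs (e p)).1]
        target' := by show r (s (e p) 1) = _; rw [(hs (e p)).2] }
    have hγ₂ : Continuous ↿γ₂ := by
      have : (↿γ₂ : U × unitInterval → X) =
          fun q => r (s.uncurry (e q.1, q.2)) := rfl
      rw [this]
      exact r.continuous.comp (s.uncurry.continuous.comp ((he.comp continuous_fst).prodMk continuous_snd))
    let γ₃ : ∀ p : U, Path (r (i (p : X × X).2)) ((p : X × X).2) := fun p =>
      { toFun := fun t => H (t, (p : X × X).2)
        continuous_toFun := hHcont.comp (continuous_id.prodMk continuous_const)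
        source' := by show H (0, _) = _; rw [H.apply_zero]; rfl
        target' := by show H (1, _) = _; rw [H.apply_one]; rfl }
    have hγ₃ : Continuous ↿γ₃ := by
      have : (↿γ₃ : U × unitInterval → X) =
          fun q => H (q.2, (q.1 : X × X).2) := rfl
      rw [this]
      exact hHcont.comp (continuous_snd.prodMk
        (continuous_snd.comp (continuous_subtype_val.comp continuous_fst)))
    let γ : ∀ p : U, Path ((p : X × X).1) ((p : X × X).2) := fun p =>
      (γ₁ p).trans ((γ₂ p).trans (γ₃ p))
    have hγ : Continuous ↿γ :=
      Path.trans_continuous_family γ₁ hγ₁ _ (Path.trans_continuous_family γ₂ hγ₂ γ₃ hγ₃)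
    refine ⟨ContinuousMap.curry ⟨fun q : U × unitInterval => γ q.1 q.2, hγ⟩, ?_⟩
    intro p
    constructor
    · show γ p 0 = _
      exact (γ p).source
    · show γ p 1 = _
      exact (γ p).target

theorem tc_le_of_homotopy_retract (X Y : Type*) [TopologicalSpace X] [TopologicalSpace Y]
    (i : C(X, Y)) (r : C(Y, X)) (h : (r.comp i).Homotopic (ContinuousMap.id X)) :
    topComplexity X ≤ topComplexity Y := by
  apply sInf_le_sInf
  rintro n ⟨k, rfl, hk⟩
  exact ⟨k, rfl, tcCover_of_retract i r h hk⟩
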